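/- Let τ belong to class 𝒯 and suppose that x = 0 is a limit point of the set of left partition endpoints {a_i}. Then lim_{x→0⁺} τ'(x) = +∞. -/

import Mathlib

open Set Filter MeasureTheory Topology

structure PCT where
  τ : ℝ → ℝ
  a : ℕ → ℝ
  b : ℕ → ℝ
  da : ℕ → ℝ
  maps_to : Set.MapsTo τ (Set.Icc 0 1) (Set.Icc 0 1)
  lt : ∀ i, a i < b i
  sub : ∀ i, Set.Ioo (a i) (b i) ⊆ Set.Icc (0:ℝ) 1
  disj : Pairwise (Function.onFun Disjoint fun i => Set.Ioo (a i) (b i))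
  null : volume (Set.Icc (0:ℝ) 1 \ ⋃ i, Set.Ioo (a i) (b i)) = 0
  mono : ∀ i, StrictMonoOn τ (Set.Ioo (a i) (b i))
  conv : ∀ i, ConvexOn ℝ (Set.Ioo (a i) (b i)) τ
  diff : ∀ i, ∀ x ∈ Set.Ioo (a i) (b i), DifferentiableAt ℝ τ x
  lim_zero : ∀ i, Filter.Tendsto τ (nhdsWithin (a i) (Set.Ioi (a i))) (nhds 0)
  deriv_lim : ∀ i, Filter.Tendsto (deriv τ) (nhdsWithin (a i) (Set.Ioi (a i))) (nhds (da i))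
  da_pos : ∀ i, 0 < da i
  sum_inv : Summable (fun i => 1 / da i)
  expand : (¬ AccPt (0:ℝ) (Filter.principal (Set.range a))) → ∃ i, a i = 0 ∧ 1 < da i

/-- The interval `(c,d)` follows a single sequence of branches under the first `n`
iterates of `τ`. -/
def IsBranchSeq (T : PCT) (n : ℕ) (c d : ℝ) : Prop :=
  c < d ∧ ∀ k < n, ∃ i, T.τ^[k] '' Set.Ioo c d ⊆ Set.Ioo (T.a i) (T.b i)

/-- `(c,d)` is a maximal open interval on which `τ^n` is a single monotone branch,
i.e. an element of the partition `𝒫⁽ⁿ⁾`. -/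
def IsBranchInterval (T : PCT) (n : ℕ) (c d : ℝ) : Prop :=
  IsBranchSeq T n c d ∧
    ∀ c' d', c' ≤ c → d ≤ d' → IsBranchSeq T n c' d' → c' = c ∧ d' = d

section Work
variable (T : PCT)

lemma da_le_deriv (T : PCT) (i : ℕ) {x : ℝ} (hx : x ∈ Set.Ioo (T.a i) (T.b i)) :
    T.da i ≤ deriv T.τ x := by
  have hmono : MonotoneOn (deriv T.τ) (Set.Ioo (T.a i) (T.b i)) :=
    (T.conv i).monotoneOn_deriv (T.diff i)
  refine le_of_tendsto (T.deriv_lim i) ?_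
  filter_upwards [Ioo_mem_nhdsGT_of_mem ⟨le_refl _, hx.1⟩] with y hy
  exact hmono ⟨hy.1, hy.2.trans hx.2⟩ hx (le_of_lt hy.2)

lemma a_nonneg (T : PCT) (i : ℕ) : 0 ≤ T.a i := by
  have : T.a i ∈ Set.Icc (0:ℝ) 1 := by
    have h1 : closure (Set.Ioo (T.a i) (T.b i)) ⊆ Set.Icc (0:ℝ) 1 :=
      closure_minimal (T.sub i) isClosed_Icc
    exact h1 (by rw [closure_Ioo (T.lt i).ne]; exact ⟨le_refl _, (T.lt i).le⟩)
  exact this.1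

lemma a_pos_of_acc (T : PCT)
    (h0 : AccPt (0:ℝ) (Filter.principal (Set.range T.a))) (i : ℕ) : 0 < T.a i := by
  rcases (a_nonneg T i).lt_or_eq with h | h
  · exact h
  exfalso
  obtain ⟨y, ⟨hyU, hyR⟩, hy0⟩ := accPt_iff_nhds.1 h0 (Set.Ioo (-(T.b i)) (T.b i))
    (Ioo_mem_nhds (by linarith [T.lt i, h.symm ▸ T.lt i]) (h ▸ T.lt i))
  obtain ⟨j, rfl⟩ := hyR
  have haj : 0 < T.a j := lt_of_le_of_ne (a_nonneg T j) (Ne.symm hy0)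
  have hij : i ≠ j := by intro hij; rw [← hij, ← h] at haj; exact lt_irrefl _ haj
  set z := (T.a j + min (T.b j) (T.b i)) / 2 with hz
  have hz1 : T.a j < z := by
    have : T.a j < min (T.b j) (T.b i) := lt_min (T.lt j) hyU.2
    dsimp [z]; linarith
  have hz2 : z < min (T.b j) (T.b i) := by
    have : T.a j < min (T.b j) (T.b i) := lt_min (T.lt j) hyU.2
    dsimp [z]; linarith
  have hmem1 : z ∈ Set.Ioo (T.a i) (T.b i) :=
    ⟨by rw [← h]; exact lt_trans haj hz1, lt_of_lt_of_le hz2 (min_le_right _ _)⟩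
  have hmem2 : z ∈ Set.Ioo (T.a j) (T.b j) :=
    ⟨hz1, lt_of_lt_of_le hz2 (min_le_left _ _)⟩
  exact (Set.disjoint_left.1 (T.disj hij)) hmem1 hmem2

end Work

theorem deriv_tendsto_atTop_of_accPt (T : PCT)
    (h0 : AccPt (0:ℝ) (Filter.principal (Set.range T.a))) :
    Filter.Tendsto (deriv T.τ) (nhdsWithin 0 (⋃ i, Set.Ioo (T.a i) (T.b i)))
      Filter.atTop := by
  rw [tendsto_atTop]
  intro M
  set K : ℝ := max M 1 with hK
  have hKpos : 0 < K := lt_of_lt_of_le one_pos (le_max_right _ _)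
  -- The set of branches with small derivative is finite
  have hcof : ∀ᶠ i in Filter.cofinite, 1 / T.da i < 1 / K :=
    T.sum_inv.tendsto_cofinite_zero (gt_mem_nhds (by positivity))
  have hF : {i : ℕ | T.da i ≤ K}.Finite := by
    refine (Filter.eventually_cofinite.1 hcof).subset ?_
    intro i hi
    simp only [Set.mem_setOf_eq, not_lt]
    exact one_div_le_one_div_of_le (T.da_pos i) hi
  -- Find δ > 0 below all a i for i in the finite bad set
  obtain ⟨δ, hδpos, hδ⟩ : ∃ δ > 0, ∀ i, T.da i ≤ K → δ ≤ T.a i := by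
    rcases ({i : ℕ | T.da i ≤ K}).eq_empty_or_nonempty with h | h
    · exact ⟨1, one_pos, fun i hi => absurd (Set.eq_empty_iff_forall_notMem.1 h i) (by simp [hi])⟩
    · obtain ⟨i0, hi0, hmin⟩ := Set.exists_min_image _ T.a hF h
      exact ⟨T.a i0, a_pos_of_acc T h0 i0, fun i hi => hmin i hi⟩
  rw [eventually_iff_exists_mem]
  refine ⟨Set.Ioo (-δ) δ ∩ (⋃ i, Set.Ioo (T.a i) (T.b i)), ?_, ?_⟩
  · exact inter_mem (mem_nhdsWithin_of_mem_nhds (Ioo_mem_nhds (neg_lt_zero.2 hδpos) hδpos)) self_mem_nhdsWithin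
  · rintro x ⟨hxδ, hxU⟩
    obtain ⟨s, ⟨i, rfl⟩, hxi⟩ := hxU
    have hiF : ¬ T.da i ≤ K := by
      intro hi
      exact absurd (lt_of_le_of_lt ((hδ i hi).trans hxi.1.le) hxδ.2) (lt_irrefl _)
    calc M ≤ K := le_max_left _ _
    _ ≤ T.da i := (not_le.1 hiF).le
    _ ≤ deriv T.τ x := da_le_deriv T i hxi
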